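/- Let n ∈ ℕ be such that a divides n+1 but δ does not divide n+1, and let ρ = (n+1) mod δ (so 1 ≤ ρ ≤ δ−1). Then the number of indices m ≤ n for which there exists k > n with w(k) = w(m) + δ equals min(ρ, min(δ − a, δ − ρ)). -/
import Mathlib


/-- `w a b δ n = n + a⌊n/a⌋ + b⌊n/δ⌋`. -/
def w (a b δ n : ℕ) : ℕ := n + a * (n / a) + b * (n / δ)


private theorem div_eq_helper {x q d : ℕ} (h1 : d * q ≤ x) (h2 : x < d * q + d) :
    x / d = q :=
  Nat.div_eq_of_lt_le (by rw [mul_comm]; exact h1)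
    (lt_of_lt_of_le h2 (le_of_eq (by ring)))

/-- Collision count at an `(a+1)`-gap: if `a ∣ n+1` but `δ ∤ n+1`, and
`ρ = (n+1) % δ`, then the number of indices `m ≤ n` having a `δ`-collision
partner `k > n` equals `min ρ (min (δ - a) (δ - ρ))`. -/
theorem stmt_10 (a δ : ℕ) (ha : 0 < a) (hlt : a < δ) (hlt2 : δ < 2 * a)
    (hgcd : Nat.gcd a δ = 1) (b : ℕ) (hb : b = a + δ) :
    ∀ n : ℕ, a ∣ (n + 1) → ¬ δ ∣ (n + 1) →
      {m : ℕ | m ≤ n ∧ ∃ k, n < k ∧ w a b δ k = w a b δ m + δ}.ncard =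
        min ((n + 1) % δ) (min (δ - a) (δ - (n + 1) % δ)) := by
  intro n hdvd hndvd
  have hδ : 0 < δ := lt_trans ha hlt
  set ρ := (n + 1) % δ with hρdef
  set q := (n + 1) / δ with hqdef
  have hρpos : 0 < ρ := Nat.pos_of_ne_zero (fun h => hndvd (Nat.dvd_of_mod_eq_zero h))
  have hρlt : ρ < δ := Nat.mod_lt _ hδ
  have hnq : n + 1 = δ * q + ρ := (Nat.div_add_mod (n + 1) δ).symm
  obtain ⟨qa, hqa⟩ := hdvd
  have hqa1 : 1 ≤ qa := by nlinarith [Nat.zero_le qa]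
  -- p := qa - 1
  obtain ⟨p, rfl⟩ : ∃ p, qa = p + 1 := ⟨qa - 1, by omega⟩
  have hnp : n + 1 = a * p + a := by rw [hqa]; ring
  have he1 : a * (p + 1) = a * p + a := by ring
  -- division facts at n
  have hna : n / a = p := div_eq_helper (by omega) (by omega)
  have hn1a : (n + 1) / a = p + 1 := div_eq_helper (by omega) (by omega)
  have hnδ : n / δ = q := div_eq_helper (by omega) (by omega)
  -- the set is an interval
  have hset : {m : ℕ | m ≤ n ∧ ∃ k, n < k ∧ w a b δ k = w a b δ m + δ}
      = ↑(Finset.Icc (n + 1 - min ρ (δ - a)) (min n (n + a - ρ))) := by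
    ext m
    simp only [Set.mem_setOf_eq, Finset.coe_Icc, Set.mem_Icc]
    constructor
    · rintro ⟨hmn, k, hk, hwk⟩
      -- basic div inequalities
      have hkn1 : n + 1 ≤ k := hk
      have hma : m / a ≤ n / a := Nat.div_le_div_right hmn
      have hka : (n + 1) / a ≤ k / a := Nat.div_le_div_right hkn1
      have hmδ : m / δ ≤ n / δ := Nat.div_le_div_right hmn
      have hkδ : (n + 1) / δ ≤ k / δ := Nat.div_le_div_right hkn1
      have hn1δ : (n + 1) / δ = q := hqdef.symm
      rw [hn1δ] at hkδ
      rw [hnδ] at hmδ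
      rw [hn1a] at hka
      rw [hna] at hma
      -- expand w
      simp only [w] at hwk
      -- show k/δ = m/δ
      have hmka : a * (m / a) ≤ a * (k / a) := Nat.mul_le_mul_left a (by omega)
      have hDeq : k / δ = m / δ := by
        by_contra hne
        have h1 : m / δ + 1 ≤ k / δ := by omega
        have h2 : b * (m / δ) + b ≤ b * (k / δ) := by
          calc b * (m / δ) + b = b * (m / δ + 1) := by ring
          _ ≤ b * (k / δ) := Nat.mul_le_mul_left b h1
        omega
      rw [hDeq] at hwk
      -- show k/a = m/a + 1 and k = m + δ - a
      have hA1 : m / a + 1 ≤ k / a := by omega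
      have hA2 : k / a ≤ m / a + 1 := by
        by_contra hA
        have : a * (m / a + 2) ≤ a * (k / a) := Nat.mul_le_mul_left a (by omega)
        have h3 : a * (m / a + 2) = a * (m / a) + 2 * a := by ring
        omega
      have hAeq : k / a = m / a + 1 := le_antisymm hA2 hA1
      rw [hAeq] at hwk
      have hmul : a * (m / a + 1) = a * (m / a) + a := by ring
      have hkm : k + a = m + δ := by omega
      -- bounds from k/δ = m/δ = q
      have hmδq : m / δ = q := by omega
      have hlow : δ * q ≤ m := by
        have := Nat.div_add_mod m δ
        rw [hmδq] at this
        omega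
      have hhigh : k < δ * q + δ := by
        have := Nat.div_add_mod k δ
        have hmod := Nat.mod_lt k hδ
        rw [hDeq, hmδq] at this
        omega
      omega
    · rintro ⟨hlo, hhi⟩
      have hm1 : n + 1 ≤ m + ρ := by omega
      have hm2 : n + 1 ≤ m + (δ - a) := by omega
      have hm3 : m ≤ n := by omega
      have hm4 : m + ρ ≤ n + a := by omega
      refine ⟨hm3, m + (δ - a), by omega, ?_⟩
      have hmδq : m / δ = q := div_eq_helper (by omega) (by omega)
      have hkδq : (m + (δ - a)) / δ = q := div_eq_helper (by omega) (by omega)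
      have hmap : m / a = p := div_eq_helper (by omega) (by omega)
      have hkap : (m + (δ - a)) / a = p + 1 := div_eq_helper (by omega) (by omega)
      simp only [w, hmδq, hkδq, hmap, hkap]
      have : a * (p + 1) = a * p + a := by ring
      omega
  rw [hset, Set.ncard_coe_finset, Nat.card_Icc]
  omega
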